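/- Let Σ ∈ P(d) be symmetric positive definite and let λ ∈ ℝ. The matrix Σ^{-1} ⊗ Σ^{-1} − λ·vec(Σ^{-1}) vec(Σ^{-1})^T is positive definite if and only if 1 − λ·d > 0, i.e. λ < 1/d. In particular, for λ = α²/d with 0 ≤ α < 1 it is positive definite. -/

import Mathlib

open Matrix Kronecker

/-- Column-stacking vectorization of a matrix: `vec A (j, i) = A i j`. -/
def vec {m n : Type*} (A : Matrix m n ℝ) : n × m → ℝ := fun p => A p.2 p.1

section Aux

variable {d : ℕ}

lemma aux_vecMulVec_mulVec (v w x : (Fin d × Fin d) → ℝ) :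
    vecMulVec v w *ᵥ x = (w ⬝ᵥ x) • v := by
  ext p
  simp [vecMulVec, mulVec, dotProduct, Finset.mul_sum, mul_assoc, mul_comm, mul_left_comm]

/-- positive definiteness of `CᵀC` for invertible real `C` -/
lemma aux_posDef_conjTranspose_mul_self {n : Type*} [Fintype n] [DecidableEq n]
    (C : Matrix n n ℝ) (hC : IsUnit C.det) : (Cᵀ * C).PosDef := by
  refine Matrix.PosDef.of_dotProduct_mulVec_pos (by simpa using Matrix.isHermitian_conjTranspose_mul_self C) fun x hx => ?_
  have hCx : C *ᵥ x ≠ 0 := by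
    intro h
    have hinj := Matrix.mulVec_injective_iff_isUnit.2 ((Matrix.isUnit_iff_isUnit_det C).2 hC)
    exact hx (hinj (by simpa using h))
  have heq : star x ⬝ᵥ (Cᵀ * C) *ᵥ x = (C *ᵥ x) ⬝ᵥ (C *ᵥ x) := by
    rw [star_trivial, ← Matrix.mulVec_mulVec, Matrix.dotProduct_mulVec]
    simp [Matrix.vecMul_transpose]
  rw [heq]
  have := (Matrix.dotProduct_star_self_pos_iff (v := C *ᵥ x)).2 hCx
  simpa using this

/-- Kronecker product of positive definite real matrices is positive definite. -/
lemma aux_posDef_kronecker {n : Type*} [Fintype n] [DecidableEq n]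
    {A B : Matrix n n ℝ} (hA : A.PosDef) (hB : B.PosDef) : (A ⊗ₖ B).PosDef := by
  exact hA.kronecker hB

end Aux

theorem rank_one_perturbation_posDef {d : ℕ} (S : Matrix (Fin d) (Fin d) ℝ)
    (hS : S.PosDef) (lam : ℝ) :
    ((S⁻¹ ⊗ₖ S⁻¹ - lam • vecMulVec (_root_.vec S⁻¹) (_root_.vec S⁻¹)).PosDef ↔
      0 < 1 - lam * (d : ℝ)) ∧
    (∀ α : ℝ, 0 ≤ α → α < 1 →
      (S⁻¹ ⊗ₖ S⁻¹ - (α ^ 2 / (d : ℝ)) • vecMulVec (_root_.vec S⁻¹) (_root_.vec S⁻¹)).PosDef) := by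
  set K : Matrix (Fin d × Fin d) (Fin d × Fin d) ℝ := S⁻¹ ⊗ₖ S⁻¹ with hKdef
  set v : Fin d × Fin d → ℝ := _root_.vec S⁻¹ with hvdef
  have hSinv : (S⁻¹).PosDef := hS.inv
  have hK : K.PosDef := aux_posDef_kronecker hSinv hSinv
  have hSS : S * S⁻¹ = 1 := Matrix.mul_nonsing_inv S (isUnit_iff_ne_zero.2 hS.det_pos.ne')
  have hKinv : K⁻¹ = S ⊗ₖ S := by
    rw [hKdef, Matrix.inv_kronecker,
      Matrix.nonsing_inv_nonsing_inv S (isUnit_iff_ne_zero.2 hS.det_pos.ne')]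
  have hKiv : K⁻¹ *ᵥ v = fun p => S p.1 p.2 := by
    rw [hKinv]
    funext p
    obtain ⟨i, j⟩ := p
    have h1 : ∀ k, ∑ l, S j l * S⁻¹ l k = (1 : Matrix (Fin d) (Fin d) ℝ) j k := by
      intro k; rw [← hSS]; simp [Matrix.mul_apply]
    calc ((S ⊗ₖ S) *ᵥ v) (i, j)
        = ∑ k, ∑ l, S i k * S j l * S⁻¹ l k := by
          simp [mulVec, dotProduct, Fintype.sum_prod_type, hvdef, _root_.vec, kroneckerMap_apply]
      _ = ∑ k, S i k * ∑ l, S j l * S⁻¹ l k := by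
          congr 1; funext k; rw [Finset.mul_sum]; congr 1; funext l; ring
      _ = ∑ k, S i k * (1 : Matrix (Fin d) (Fin d) ℝ) j k := by
          congr 1; funext k; rw [h1 k]
      _ = S i j := by
          simp [Matrix.one_apply, mul_comm]
  have hd : v ⬝ᵥ (K⁻¹ *ᵥ v) = (d : ℝ) := by
    rw [hKiv]
    calc v ⬝ᵥ (fun p => S p.1 p.2)
        = ∑ i, ∑ j, S⁻¹ j i * S i j := by
          simp [dotProduct, Fintype.sum_prod_type, hvdef, _root_.vec]
      _ = ∑ i, (S * S⁻¹) i i := by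
          congr 1; funext i; rw [Matrix.mul_apply]; congr 1; funext j; ring
      _ = (d : ℝ) := by rw [hSS]; simp [Matrix.one_apply]
  have hKv : K *ᵥ (K⁻¹ *ᵥ v) = v := by
    rw [Matrix.mulVec_mulVec, Matrix.mul_nonsing_inv _ (isUnit_iff_ne_zero.2 hK.det_pos.ne')]
    simp
  have hKsymm : Kᵀ = K := hK.isHermitian.eq
  set a : Fin d × Fin d → ℝ := K⁻¹ *ᵥ v with hadef
  have haK : ∀ x : Fin d × Fin d → ℝ, a ⬝ᵥ (K *ᵥ x) = v ⬝ᵥ x := by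
    intro x
    rw [Matrix.dotProduct_mulVec, ← Matrix.mulVec_transpose, hKsymm, hadef, hKv]
  -- quadratic form of the perturbed matrix
  have hquad : ∀ (μ : ℝ) (x : Fin d × Fin d → ℝ),
      x ⬝ᵥ ((K - μ • vecMulVec v v) *ᵥ x) = x ⬝ᵥ (K *ᵥ x) - μ * (v ⬝ᵥ x) ^ 2 := by
    intro μ x
    rw [Matrix.sub_mulVec, Matrix.smul_mulVec, aux_vecMulVec_mulVec]
    rw [dotProduct_sub, dotProduct_smul, dotProduct_smul]
    rw [dotProduct_comm x v]
    simp only [smul_eq_mul]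
    ring
  -- Cauchy-Schwarz: (v ⬝ᵥ x)^2 ≤ d * (x ⬝ᵥ K *ᵥ x)
  have hCS : ∀ x : Fin d × Fin d → ℝ, (v ⬝ᵥ x) ^ 2 ≤ (d : ℝ) * (x ⬝ᵥ (K *ᵥ x)) := by
    intro x
    have hgen : ∀ t : ℝ, 0 ≤ x ⬝ᵥ (K *ᵥ x) - 2 * t * (v ⬝ᵥ x) + t ^ 2 * (d : ℝ) := by
      intro t
      have h0 := hK.posSemidef.dotProduct_mulVec_nonneg (x - t • a)
      rw [star_trivial] at h0
      have hexp : (x - t • a) ⬝ᵥ (K *ᵥ (x - t • a))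
          = x ⬝ᵥ (K *ᵥ x) - 2 * t * (v ⬝ᵥ x) + t ^ 2 * (d : ℝ) := by
        rw [Matrix.mulVec_sub, Matrix.mulVec_smul]
        rw [dotProduct_sub, sub_dotProduct, sub_dotProduct]
        rw [smul_dotProduct, smul_dotProduct, dotProduct_smul, dotProduct_smul]
        have e1 : a ⬝ᵥ (K *ᵥ x) = v ⬝ᵥ x := haK x
        have e2 : a ⬝ᵥ (K *ᵥ a) = (d : ℝ) := by rw [haK a]; exact hd
        have e3 : x ⬝ᵥ (K *ᵥ a) = v ⬝ᵥ x := by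
          rw [hKv, dotProduct_comm]
        rw [e1, e2, e3]
        simp only [smul_eq_mul]
        ring
      rw [hexp] at h0
      exact h0
    rcases Nat.eq_zero_or_pos d with hd0 | hd0
    · subst hd0
      have hvx : v ⬝ᵥ x = 0 := by
        simp [dotProduct]
      have hKxnn : 0 ≤ x ⬝ᵥ (K *ᵥ x) := by
        have := hK.posSemidef.dotProduct_mulVec_nonneg x
        rwa [star_trivial] at this
      rw [hvx]
      simp [hKxnn]
    · have hdpos : (0:ℝ) < (d : ℝ) := by exact_mod_cast hd0
      have ht := hgen ((v ⬝ᵥ x) / d)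
      have h3 : 0 ≤ (d : ℝ) * (x ⬝ᵥ (K *ᵥ x) - 2 * ((v ⬝ᵥ x) / d) * (v ⬝ᵥ x)
          + ((v ⬝ᵥ x) / d) ^ 2 * (d : ℝ)) := mul_nonneg hdpos.le ht
      have h4 : (d : ℝ) * (x ⬝ᵥ (K *ᵥ x) - 2 * ((v ⬝ᵥ x) / d) * (v ⬝ᵥ x)
          + ((v ⬝ᵥ x) / d) ^ 2 * (d : ℝ)) = (d : ℝ) * (x ⬝ᵥ (K *ᵥ x)) - (v ⬝ᵥ x) ^ 2 := by
        field_simp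
        ring
      linarith
  -- hermitianity of the perturbed matrix
  have hherm : ∀ μ : ℝ, (K - μ • vecMulVec v v).IsHermitian := by
    intro μ
    show (K - μ • vecMulVec v v)ᴴ = K - μ • vecMulVec v v
    ext p q
    have hKpq := hK.isHermitian.apply q p
    simp only [Matrix.conjTranspose_apply, Matrix.sub_apply, Matrix.smul_apply,
      Matrix.vecMulVec_apply, star_trivial, smul_eq_mul] at *
    rw [hKpq]
    ring
  have main : ∀ μ : ℝ, 0 < 1 - μ * (d : ℝ) → (K - μ • vecMulVec v v).PosDef := by
    intro μ hμ
    refine Matrix.PosDef.of_dotProduct_mulVec_pos (hherm μ) fun x hx => ?_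
    have hKx : 0 < x ⬝ᵥ (K *ᵥ x) := by
      have := hK.dotProduct_mulVec_pos hx
      rwa [star_trivial] at this
    rw [star_trivial, hquad μ x]
    rcases le_or_gt μ 0 with hμ0 | hμ0
    · have : μ * (v ⬝ᵥ x) ^ 2 ≤ 0 := mul_nonpos_of_nonpos_of_nonneg hμ0 (sq_nonneg _)
      linarith
    · have h1 : μ * (v ⬝ᵥ x) ^ 2 ≤ μ * ((d : ℝ) * (x ⬝ᵥ (K *ᵥ x))) :=
        mul_le_mul_of_nonneg_left (hCS x) hμ0.le
      nlinarith
  constructor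
  · constructor
    · intro hPD
      rcases Nat.eq_zero_or_pos d with hd0 | hd0
      · subst hd0; simp
      · have hdpos : (0:ℝ) < (d : ℝ) := by exact_mod_cast hd0
        have hva : v ⬝ᵥ a = (d : ℝ) := hd
        have ha0 : a ≠ 0 := by
          intro h
          rw [h, dotProduct_zero] at hva
          exact hdpos.ne (by linarith)
        have hpos := hPD.dotProduct_mulVec_pos ha0
        rw [star_trivial, hquad lam a] at hpos
        have haKa : a ⬝ᵥ (K *ᵥ a) = (d : ℝ) := by
          rw [haK a]; exact hd
        have hvaa : v ⬝ᵥ a = (d : ℝ) := hd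
        rw [haKa, hvaa] at hpos
        nlinarith
    · exact main lam
  · intro α hα0 hα1
    apply main
    rcases Nat.eq_zero_or_pos d with hd0 | hd0
    · subst hd0; simp
    · have hdpos : ((d : ℝ)) ≠ 0 := by positivity
      rw [div_mul_cancel₀ _ hdpos]
      nlinarith
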